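/- In the same setting, with B := P(a−A) = V Π⁻¹ Vᵀ, one has P a Pᵀ = ½(B + Bᵀ). In particular the symmetric part of B equals P a Pᵀ and is positive semidefinite. -/

import Mathlib

open Matrix

set_option maxHeartbeats 1000000 in
/-- With `B := P(a-A) = V Π⁻¹ Vᵀ`, one has `P a Pᵀ = ½(B + Bᵀ)`; in particular the
symmetric part of `B` equals `P a Pᵀ` and is positive semidefinite. -/
theorem stmt7 {d k : ℕ} (hk : k ≤ d) (a A : Matrix (Fin d) (Fin d) ℝ)
    (M : Matrix (Fin d) (Fin k) ℝ) (V : Matrix (Fin d) (Fin (d - k)) ℝ)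
    (ha : a.PosDef) (hA : Aᵀ = -A)
    (hM : Function.Injective M.mulVec) (hV : Function.Injective V.mulVec)
    (hVM : Vᵀ * M = 0)
    (P B : Matrix (Fin d) (Fin d) ℝ)
    (hP : P = 1 - (a - A) * M * (Mᵀ * (a - A) * M)⁻¹ * Mᵀ)
    (hB : B = P * (a - A)) :
    P * a * Pᵀ = (1 / 2 : ℝ) • (B + Bᵀ) ∧ ((1 / 2 : ℝ) • (B + Bᵀ)).PosSemidef := by
  have haT : aᵀ = a := by
    rw [← conjTranspose_eq_transpose_of_trivial]; exact ha.1
  -- skew quadratic form vanishes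
  have hskew : ∀ y : Fin d → ℝ, y ⬝ᵥ A.mulVec y = 0 := by
    intro y
    have h : y ⬝ᵥ A.mulVec y = -(y ⬝ᵥ A.mulVec y) := by
      conv_lhs => rw [dotProduct_mulVec]
      rw [← mulVec_transpose, hA, neg_mulVec, neg_dotProduct, dotProduct_comm]
    linarith
  -- Φ is invertible
  have hΦ : IsUnit (Mᵀ * (a - A) * M) := by
    rw [← Matrix.mulVec_injective_iff_isUnit]
    intro x y hxy
    have h : ∀ z, (Mᵀ * (a - A) * M).mulVec z = 0 → z = 0 := by
      intro z hz
      have h1 : z ⬝ᵥ (Mᵀ * (a - A) * M).mulVec z = 0 := by rw [hz, dotProduct_zero]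
      have h2 : (M.mulVec z) ⬝ᵥ (a - A).mulVec (M.mulVec z) = 0 := by
        have e : z ⬝ᵥ (Mᵀ * (a - A) * M).mulVec z
            = (M.mulVec z) ⬝ᵥ (a - A).mulVec (M.mulVec z) := by
          rw [← mulVec_mulVec, ← mulVec_mulVec, dotProduct_mulVec z Mᵀ, vecMul_transpose]
        rw [← e, h1]
      rw [sub_mulVec, dotProduct_sub, hskew, sub_zero] at h2
      have hMz : M.mulVec z = 0 := by
        by_contra hne
        have := ha.dotProduct_mulVec_pos hne
        simp only [RCLike.re_to_real, star_trivial] at this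
        rw [h2] at this
        exact lt_irrefl 0 this
      have : M.mulVec z = M.mulVec 0 := by rw [hMz, mulVec_zero]
      exact hM this
    have hd : (Mᵀ * (a - A) * M).mulVec (x - y) = 0 := by
      rw [mulVec_sub, hxy, sub_self]
    exact sub_eq_zero.mp (h (x - y) hd)
  have hinv : (Mᵀ * (a - A) * M)⁻¹ * (Mᵀ * (a - A) * M) = 1 :=
    nonsing_inv_mul _ ((Matrix.isUnit_iff_isUnit_det _).mp hΦ)
  -- P(a-A)M = 0
  have hPM : P * (a - A) * M = 0 := by
    obtain ⟨X, hX⟩ : ∃ X, X = (Mᵀ * (a - A) * M)⁻¹ := ⟨_, rfl⟩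
    obtain ⟨N, hN⟩ : ∃ N, N = Mᵀ * (a - A) * M := ⟨_, rfl⟩
    have hinv' : X * N = 1 := by rw [hX, hN]; exact hinv
    have hP' : P = 1 - (a - A) * M * X * Mᵀ := by rw [hP, hX]
    have e : (1 - (a - A) * M * X * Mᵀ) * (a - A) * M
        = (a - A) * M - (a - A) * M * (X * N) := by
      simp only [hN, Matrix.sub_mul, Matrix.one_mul, Matrix.mul_assoc]
    rw [hP', e, hinv', Matrix.mul_one, sub_self]
  -- B = P(a-A)Pᵀ
  have hPt : Pᵀ = 1 - M * ((a - A) * M * (Mᵀ * (a - A) * M)⁻¹)ᵀ := by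
    rw [hP, transpose_sub, transpose_one, transpose_mul, transpose_transpose]
  have hBP : P * (a - A) * Pᵀ = B := by
    rw [hPt, Matrix.mul_sub, Matrix.mul_one, ← Matrix.mul_assoc, hPM, Matrix.zero_mul,
      sub_zero, hB]
  have hBT : Bᵀ = P * (a + A) * Pᵀ := by
    rw [← hBP, transpose_mul, transpose_mul, transpose_transpose, transpose_sub, haT, hA,
      sub_neg_eq_add, ← Matrix.mul_assoc]
  have hmain : P * a * Pᵀ = (1 / 2 : ℝ) • (B + Bᵀ) := by
    rw [hBT, ← hBP]
    have e : P * (a - A) * Pᵀ + P * (a + A) * Pᵀ = P * a * Pᵀ + P * a * Pᵀ := by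
      noncomm_ring
    rw [e, smul_add]
    module
  refine ⟨hmain, ?_⟩
  rw [← hmain]
  have := ha.posSemidef.mul_mul_conjTranspose_same P
  rwa [conjTranspose_eq_transpose_of_trivial] at this
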